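/- Let λ be an F-invariant probability measure on ℝ^{2p} and π a probability measure absolutely continuous with respect to λ with density q satisfying Σ_{f ∈ F} q(f(x)) = 2^p for λ-almost all x. Then π = λ on the σ-field G = {A Borel : f⁻¹(A) = A for all f ∈ F} of F-invariant Borel sets. -/
import Mathlib


open MeasureTheory Set ENNReal

/-- The swap map `f_S` on `ℝ^p × ℝ^p`. -/
noncomputable def swapMap (p : ℕ) (S : Finset (Fin p)) :
    ((Fin p → ℝ) × (Fin p → ℝ)) → ((Fin p → ℝ) × (Fin p → ℝ)) :=
  fun z => (fun i => if i ∈ S then z.2 i else z.1 i,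
            fun i => if i ∈ S then z.1 i else z.2 i)

lemma measurable_swapMap (p : ℕ) (S : Finset (Fin p)) :
    Measurable (swapMap p S) := by
  apply Measurable.prod
  · apply measurable_pi_lambda
    intro i
    by_cases h : i ∈ S <;> simp only [swapMap, h, if_true, if_false]
    · exact (measurable_pi_apply i).comp measurable_snd
    · exact (measurable_pi_apply i).comp measurable_fst
  · apply measurable_pi_lambda
    intro i
    by_cases h : i ∈ S <;> simp only [swapMap, h, if_true, if_false]
    · exact (measurable_pi_apply i).comp measurable_fst
    · exact (measurable_pi_apply i).comp measurable_snd

/-- If `λ` is `F`-invariant and `π = λ.withDensity q` with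
`∑_{f ∈ F} q(f(x)) = 2^p` for `λ`-a.e. `x`, then `π = λ` on the σ-field
`G` of `F`-invariant Borel sets. -/
theorem density_implies_agree_on_invariant (p : ℕ) (hp : 2 ≤ p)
    (lam π : Measure ((Fin p → ℝ) × (Fin p → ℝ)))
    [IsProbabilityMeasure lam] [IsProbabilityMeasure π]
    (hinv : ∀ S : Finset (Fin p), lam.map (swapMap p S) = lam)
    (q : ((Fin p → ℝ) × (Fin p → ℝ)) → ℝ≥0∞) (hq : Measurable q)
    (hπ : π = lam.withDensity q)
    (hsum : ∀ᵐ z ∂lam, ∑ S : Finset (Fin p), q (swapMap p S z) = (2 : ℝ≥0∞) ^ p) :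
    ∀ A : Set ((Fin p → ℝ) × (Fin p → ℝ)), MeasurableSet A →
      (∀ S : Finset (Fin p), swapMap p S ⁻¹' A = A) → π A = lam A := by
  intro A hA hAinv
  have key : ∀ S : Finset (Fin p),
      ∫⁻ z in A, q (swapMap p S z) ∂lam = ∫⁻ z in A, q z ∂lam := by
    intro S
    conv_rhs => rw [← hinv S]
    rw [setLIntegral_map hA hq (measurable_swapMap p S), hAinv S]
  have hsum' : ∑ S : Finset (Fin p), ∫⁻ z in A, q (swapMap p S z) ∂lam
      = (2 : ℝ≥0∞) ^ p * lam A := by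
    rw [← lintegral_finset_sum (f := fun S z => q (swapMap p S z)) _
      (fun S _ => hq.comp (measurable_swapMap p S))]
    calc ∫⁻ z in A, ∑ S : Finset (Fin p), q (swapMap p S z) ∂lam
        = ∫⁻ _ in A, (2 : ℝ≥0∞) ^ p ∂lam := by
          apply lintegral_congr_ae
          exact (ae_restrict_of_ae hsum).mono fun z hz => hz
      _ = (2 : ℝ≥0∞) ^ p * lam A := by
          rw [setLIntegral_const]
  have hsum'' : ∑ S : Finset (Fin p), ∫⁻ z in A, q (swapMap p S z) ∂lam
      = (2 : ℝ≥0∞) ^ p * ∫⁻ z in A, q z ∂lam := by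
    simp only [key, Finset.sum_const, Finset.card_univ, Fintype.card_finset,
      Fintype.card_fin, nsmul_eq_mul, Nat.cast_pow, Nat.cast_ofNat]
  have h2 : ((2 : ℝ≥0∞) ^ p) ≠ 0 := by positivity
  have h2' : ((2 : ℝ≥0∞) ^ p) ≠ ⊤ := by
    exact ENNReal.pow_ne_top (by norm_num)
  have : ∫⁻ z in A, q z ∂lam = lam A :=
    (ENNReal.mul_right_inj h2 h2').mp (hsum''.symm.trans hsum')
  rw [hπ, withDensity_apply _ hA, this]
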